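/- For f with L-Lipschitz gradient and minimizer x⋆ (∇f(x⋆)=0), gradient descent with stepsize h = 1/L applied to an m-strongly convex f satisfies ‖x_{k+1} − x⋆‖ ≤ (1 − m/L)‖x_k − x⋆‖, hence ‖x_k − x⋆‖ ≤ (1 − 1/κ)^k ‖x_0 − x⋆‖ with κ = L/m. -/

import Mathlib

open RealInnerProductSpace

variable {d : ℕ}

local notation "E" => EuclideanSpace ℝ (Fin d)

lemma line_deriv (f : E → ℝ) (g : E → E) (hgrad : ∀ x, HasGradientAt f (g x) x)
    (x v : E) (t : ℝ) :
    HasDerivAt (fun t : ℝ => f (x + t • v)) ⟪g (x + t • v), v⟫ t := by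
  have hline : HasDerivAt (fun t : ℝ => x + t • v) v t := by
    simpa using ((hasDerivAt_id t).smul_const v).const_add x
  have := (hgrad (x + t • v)).hasFDerivAt.comp_hasDerivAt t hline
  simp at this
  exact this

lemma phi_deriv (f : E → ℝ) (g : E → E) (hgrad : ∀ x, HasGradientAt f (g x) x)
    (x v : E) (c : ℝ) (t : ℝ) :
    HasDerivAt (fun t : ℝ => f (x + t • v) - t * ⟪g x, v⟫ - c / 2 * ‖v‖ ^ 2 * t ^ 2)
      (⟪g (x + t • v), v⟫ - ⟪g x, v⟫ - c * ‖v‖ ^ 2 * t) t := by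
  have h1 := line_deriv f g hgrad x v t
  have h2 : HasDerivAt (fun t : ℝ => t * ⟪g x, v⟫) ⟪g x, v⟫ t := by
    simpa using (hasDerivAt_id t).mul_const ⟪g x, v⟫
  have h3 : HasDerivAt (fun t : ℝ => c / 2 * ‖v‖ ^ 2 * t ^ 2) (c * ‖v‖ ^ 2 * t) t := by
    have := (hasDerivAt_pow 2 t).const_mul (c / 2 * ‖v‖ ^ 2)
    rw [show c * ‖v‖ ^ 2 * t = c / 2 * ‖v‖ ^ 2 * (((2:ℕ):ℝ) * t ^ (2 - 1)) by
      rw [show (2:ℕ) - 1 = 1 from rfl]; push_cast; ring]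
    exact this
  exact (h1.sub h2).sub h3

lemma lower_bound (f : E → ℝ) (g : E → E) (m : ℝ)
    (hgrad : ∀ x, HasGradientAt f (g x) x)
    (hmono : ∀ x y, m * ‖x - y‖ ^ 2 ≤ ⟪x - y, g x - g y⟫) (x y : E) :
    f x + ⟪g x, y - x⟫ + m / 2 * ‖y - x‖ ^ 2 ≤ f y := by
  set v := y - x with hv
  set φ : ℝ → ℝ := fun t => f (x + t • v) - t * ⟪g x, v⟫ - m / 2 * ‖v‖ ^ 2 * t ^ 2 with hφdef
  have hφ := phi_deriv f g hgrad x v m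
  have hmon : MonotoneOn φ (Set.Icc (0:ℝ) 1) := by
    apply monotoneOn_of_deriv_nonneg (convex_Icc 0 1)
    · exact fun t _ => ((hφ t).continuousAt).continuousWithinAt
    · exact fun t _ => ((hφ t).differentiableAt).differentiableWithinAt
    · intro t ht
      rw [interior_Icc] at ht
      rw [(hφ t).deriv]
      have hmt := hmono (x + t • v) x
      have he : x + t • v - x = t • v := by abel
      rw [he] at hmt
      have hnorm : ‖t • v‖ ^ 2 = t ^ 2 * ‖v‖ ^ 2 := by
        rw [norm_smul, mul_pow, Real.norm_eq_abs, sq_abs]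
      have hinner : ⟪t • v, g (x + t • v) - g x⟫ = t * (⟪g (x + t • v), v⟫ - ⟪g x, v⟫) := by
        rw [real_inner_smul_left, inner_sub_right, real_inner_comm v (g (x + t • v)), real_inner_comm v (g x)]
      rw [hnorm, hinner] at hmt
      have ht0 : 0 < t := ht.1
      nlinarith [hmt, ht0]
  have h01 := hmon (Set.mem_Icc.2 ⟨le_refl 0, zero_le_one⟩) (Set.mem_Icc.2 ⟨zero_le_one, le_refl 1⟩) zero_le_one
  have hφ0 : φ 0 = f x := by simp [hφdef]
  have hφ1 : φ 1 = f y - ⟪g x, v⟫ - m / 2 * ‖v‖ ^ 2 := by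
    simp [hφdef, hv]
  rw [hφ0, hφ1] at h01
  linarith

lemma upper_bound (f : E → ℝ) (g : E → E) (L : ℝ)
    (hgrad : ∀ x, HasGradientAt f (g x) x)
    (hlip : ∀ x y, ‖g x - g y‖ ≤ L * ‖x - y‖) (x y : E) :
    f y ≤ f x + ⟪g x, y - x⟫ + L / 2 * ‖y - x‖ ^ 2 := by
  set v := y - x with hv
  set φ : ℝ → ℝ := fun t => f (x + t • v) - t * ⟪g x, v⟫ - L / 2 * ‖v‖ ^ 2 * t ^ 2 with hφdef
  have hφ := phi_deriv f g hgrad x v L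
  have hmon : AntitoneOn φ (Set.Icc (0:ℝ) 1) := by
    apply antitoneOn_of_deriv_nonpos (convex_Icc 0 1)
    · exact fun t _ => ((hφ t).continuousAt).continuousWithinAt
    · exact fun t _ => ((hφ t).differentiableAt).differentiableWithinAt
    · intro t ht
      rw [interior_Icc] at ht
      rw [(hφ t).deriv]
      have hl := hlip (x + t • v) x
      have he : x + t • v - x = t • v := by abel
      rw [he] at hl
      have hip : ⟪g (x + t • v), v⟫ - ⟪g x, v⟫ = ⟪g (x + t • v) - g x, v⟫ := by
        rw [inner_sub_left]
      have hcs := real_inner_le_norm (g (x + t • v) - g x) v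
      have hns : ‖t • v‖ = t * ‖v‖ := by
        rw [norm_smul, Real.norm_eq_abs, abs_of_pos ht.1]
      rw [hns] at hl
      have hv0 : (0:ℝ) ≤ ‖v‖ := norm_nonneg v
      nlinarith [hcs, hl, ht.1.le]
  have h01 := hmon (Set.mem_Icc.2 ⟨le_refl 0, zero_le_one⟩) (Set.mem_Icc.2 ⟨zero_le_one, le_refl 1⟩) zero_le_one
  have hφ0 : φ 0 = f x := by simp [hφdef]
  have hφ1 : φ 1 = f y - ⟪g x, v⟫ - L / 2 * ‖v‖ ^ 2 := by
    simp [hφdef, hv]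
  rw [hφ0, hφ1] at h01
  linarith

lemma hB' (f : E → ℝ) (g : E → E) (m : ℝ)
    (hgrad : ∀ x, HasGradientAt f (g x) x)
    (hmono : ∀ x y, m * ‖x - y‖ ^ 2 ≤ ⟪x - y, g x - g y⟫) (a b : E) :
    f a - m / 2 * ‖a‖ ^ 2 + ⟪g a - m • a, b - a⟫ ≤ f b - m / 2 * ‖b‖ ^ 2 := by
  have hl := lower_bound f g m hgrad hmono a b
  have hexp : ‖b‖ ^ 2 = ‖a‖ ^ 2 + 2 * ⟪a, b - a⟫ + ‖b - a‖ ^ 2 := by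
    have h := norm_add_sq_real a (b - a)
    rw [add_sub_cancel] at h
    exact h
  have key : f a - m / 2 * ‖a‖ ^ 2 + ⟪g a - m • a, b - a⟫ - (f b - m / 2 * ‖b‖ ^ 2)
      = f a + ⟪g a, b - a⟫ + m / 2 * ‖b - a‖ ^ 2 - f b := by
    rw [inner_sub_left, real_inner_smul_left, hexp]; ring
  linarith

lemma hA' (f : E → ℝ) (g : E → E) (m L : ℝ)
    (hgrad : ∀ x, HasGradientAt f (g x) x)
    (hlip : ∀ x y, ‖g x - g y‖ ≤ L * ‖x - y‖) (a b : E) :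
    f b - m / 2 * ‖b‖ ^ 2 ≤ f a - m / 2 * ‖a‖ ^ 2 + ⟪g a - m • a, b - a⟫
      + (L - m) / 2 * ‖b - a‖ ^ 2 := by
  have hu := upper_bound f g L hgrad hlip a b
  have hexp : ‖b‖ ^ 2 = ‖a‖ ^ 2 + 2 * ⟪a, b - a⟫ + ‖b - a‖ ^ 2 := by
    have h := norm_add_sq_real a (b - a)
    rw [add_sub_cancel] at h
    exact h
  have key : f b - m / 2 * ‖b‖ ^ 2 - (f a - m / 2 * ‖a‖ ^ 2 + ⟪g a - m • a, b - a⟫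
      + (L - m) / 2 * ‖b - a‖ ^ 2) = f b - (f a + ⟪g a, b - a⟫ + L / 2 * ‖b - a‖ ^ 2) := by
    rw [inner_sub_left, real_inner_smul_left, hexp]; ring
  linarith

lemma key_ineq (f : E → ℝ) (g : E → E) (m L : ℝ) (hmL : m < L)
    (hgrad : ∀ x, HasGradientAt f (g x) x)
    (hmono : ∀ x y, m * ‖x - y‖ ^ 2 ≤ ⟪x - y, g x - g y⟫)
    (hlip : ∀ x y, ‖g x - g y‖ ≤ L * ‖x - y‖) (a b : E) :
    f a - m / 2 * ‖a‖ ^ 2 + ⟪g a - m • a, b - a⟫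
      + 1 / (2 * (L - m)) * ‖(g b - m • b) - (g a - m • a)‖ ^ 2
      ≤ f b - m / 2 * ‖b‖ ^ 2 := by
  set G : E → E := fun z => g z - m • z with hG
  set Δ : E := G b - G a with hΔ
  have hL' : 0 < L - m := by linarith
  set z : E := b - (1 / (L - m)) • Δ with hz
  have h1 := hA' f g m L hgrad hlip b z
  have h2 := hB' f g m hgrad hmono a z
  have hzb : z - b = -((1 / (L - m)) • Δ) := by rw [hz]; abel
  have e1 : ⟪G b, z - b⟫ = -(1 / (L - m)) * ⟪G b, Δ⟫ := by
    rw [hzb, inner_neg_right, real_inner_smul_right]; ring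
  have e2 : ‖z - b‖ ^ 2 = (1 / (L - m)) ^ 2 * ‖Δ‖ ^ 2 := by
    rw [hzb, norm_neg, norm_smul, mul_pow, Real.norm_eq_abs, sq_abs]
  have e3 : ⟪G a, z - a⟫ = ⟪G a, b - a⟫ - (1 / (L - m)) * ⟪G a, Δ⟫ := by
    have : z - a = (b - a) - (1 / (L - m)) • Δ := by rw [hz]; abel
    rw [this, inner_sub_right, real_inner_smul_right]
  have e4 : ⟪G b, Δ⟫ - ⟪G a, Δ⟫ = ‖Δ‖ ^ 2 := by
    rw [← inner_sub_left, ← hΔ, real_inner_self_eq_norm_sq]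
  rw [e1, e2] at h1
  rw [e3] at h2
  have hfield : (1 : ℝ) / (L - m) ≠ 0 := by positivity
  have hc : (L - m) / 2 * ((1 / (L - m)) ^ 2 * ‖Δ‖ ^ 2) = 1 / (2 * (L - m)) * ‖Δ‖ ^ 2 := by
    field_simp
  have e5 : (1 / (L - m)) * ⟪G b, Δ⟫ - (1 / (L - m)) * ⟪G a, Δ⟫
      = (1 / (L - m)) * ‖Δ‖ ^ 2 := by rw [← mul_sub, e4]
  have e6 : (1 / (L - m)) * ‖Δ‖ ^ 2 = 2 * (1 / (2 * (L - m)) * ‖Δ‖ ^ 2) := by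
    field_simp
  linarith [h1, h2, hc, e5, e6]

lemma coco (f : E → ℝ) (g : E → E) (m L : ℝ) (hmL : m < L)
    (hgrad : ∀ x, HasGradientAt f (g x) x)
    (hmono : ∀ x y, m * ‖x - y‖ ^ 2 ≤ ⟪x - y, g x - g y⟫)
    (hlip : ∀ x y, ‖g x - g y‖ ≤ L * ‖x - y‖) (a b : E) :
    ‖(g a - m • a) - (g b - m • b)‖ ^ 2
      ≤ (L - m) * ⟪a - b, (g a - m • a) - (g b - m • b)⟫ := by
  have h1 := key_ineq f g m L hmL hgrad hmono hlip a b
  have h2 := key_ineq f g m L hmL hgrad hmono hlip b a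
  set P : E := g a - m • a with hP
  set Q : E := g b - m • b with hQ
  have hL' : 0 < L - m := by linarith
  have hq : ‖Q - P‖ ^ 2 = ‖P - Q‖ ^ 2 := by rw [norm_sub_rev]
  have hsum : ⟪P, b - a⟫ + ⟪Q, a - b⟫ = -⟪a - b, P - Q⟫ := by
    have hc1 : (⟪a - b, P - Q⟫ : ℝ) = ⟪P - Q, a - b⟫ := real_inner_comm _ _
    have hc2 : (⟪P - Q, a - b⟫ : ℝ) = ⟪P, a - b⟫ - ⟪Q, a - b⟫ := inner_sub_left _ _ _
    have hc3 : (⟪P, b - a⟫ : ℝ) = -⟪P, a - b⟫ := by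
      rw [show b - a = -(a - b) from by abel, inner_neg_right]
    rw [hc1, hc2, hc3]; ring
  have h3 : 1 / (2 * (L - m)) * ‖P - Q‖ ^ 2 + 1 / (2 * (L - m)) * ‖P - Q‖ ^ 2
      ≤ ⟪a - b, P - Q⟫ := by
    have hq' : 1 / (2 * (L - m)) * ‖Q - P‖ ^ 2 = 1 / (2 * (L - m)) * ‖P - Q‖ ^ 2 := by rw [hq]
    linarith [h1, h2, hsum, hq']
  have e : (L - m) * (1 / (2 * (L - m)) * ‖P - Q‖ ^ 2
      + 1 / (2 * (L - m)) * ‖P - Q‖ ^ 2) = ‖P - Q‖ ^ 2 := by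
    field_simp; ring
  have h4 := mul_le_mul_of_nonneg_left h3 hL'.le
  rw [e] at h4
  exact h4

theorem gradient_descent_rate_one_over_L (d : ℕ) (f : EuclideanSpace ℝ (Fin d) → ℝ)
    (g : EuclideanSpace ℝ (Fin d) → EuclideanSpace ℝ (Fin d)) (m L : ℝ)
    (hm : 0 < m) (hmL : m ≤ L)
    (hgrad : ∀ x, HasGradientAt f (g x) x)
    (hmono : ∀ x y, m * ‖x - y‖ ^ 2 ≤ ⟪x - y, g x - g y⟫)
    (hlip : ∀ x y, ‖g x - g y‖ ≤ L * ‖x - y‖)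
    (xstar : EuclideanSpace ℝ (Fin d)) (hstar : g xstar = 0)
    (x : ℕ → EuclideanSpace ℝ (Fin d))
    (hiter : ∀ k, x (k + 1) = x k - (1 / L) • g (x k)) :
    (∀ k, ‖x (k + 1) - xstar‖ ≤ (1 - m / L) * ‖x k - xstar‖) ∧
      ∀ k, ‖x k - xstar‖ ≤ (1 - 1 / (L / m)) ^ k * ‖x 0 - xstar‖ := by
  have hL : 0 < L := lt_of_lt_of_le hm hmL
  have hfac0 : 0 ≤ 1 - m / L := by
    have : m / L ≤ 1 := (div_le_one hL).2 hmL
    linarith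
  have hstep : ∀ k, ‖x (k + 1) - xstar‖ ≤ (1 - m / L) * ‖x k - xstar‖ := by
    intro k
    by_cases hzero : x k = xstar
    · rw [hiter k, hzero, hstar]
      simp
    · have hupos : 0 < ‖x k - xstar‖ := by
        rw [norm_pos_iff, sub_ne_zero]; exact hzero
      have hmonoK : m * ‖x k - xstar‖ ^ 2 ≤ ⟪x k - xstar, g (x k)⟫ := by
        have h := hmono (x k) xstar
        rw [hstar, sub_zero] at h
        exact h
      have hlipK : ‖g (x k)‖ ≤ L * ‖x k - xstar‖ := by
        have h := hlip (x k) xstar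
        rw [hstar, sub_zero] at h
        exact h
      have hBL : ‖g (x k)‖ ^ 2 ≤ L ^ 2 * ‖x k - xstar‖ ^ 2 := by
        nlinarith [hlipK, norm_nonneg (g (x k)), norm_nonneg (x k - xstar), hL]
      have hcs := real_inner_le_norm (x k - xstar) (g (x k))
      have hmd : m * ‖x k - xstar‖ ≤ ‖g (x k)‖ := by
        nlinarith [hmonoK, hcs, hupos]
      have hBm : m ^ 2 * ‖x k - xstar‖ ^ 2 ≤ ‖g (x k)‖ ^ 2 := by
        nlinarith [hmd, norm_nonneg (g (x k)), hm.le, hupos]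
      have hcoco : ‖g (x k)‖ ^ 2 + m * L * ‖x k - xstar‖ ^ 2
          ≤ (L + m) * ⟪x k - xstar, g (x k)⟫ := by
        rcases eq_or_lt_of_le hmL with heq | hlt
        · subst heq
          nlinarith [hmonoK, hBL, hm]
        · have hc := coco f g m L hlt hgrad hmono hlip (x k) xstar
          rw [hstar] at hc
          have hW : g (x k) - m • x k - (0 - m • xstar) = g (x k) - m • (x k - xstar) := by
            rw [smul_sub]; abel
          rw [hW] at hc
          have hexp1 : ‖g (x k) - m • (x k - xstar)‖ ^ 2
              = ‖g (x k)‖ ^ 2 - 2 * (m * ⟪x k - xstar, g (x k)⟫)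
                + m ^ 2 * ‖x k - xstar‖ ^ 2 := by
            rw [norm_sub_sq_real, real_inner_smul_right, norm_smul, Real.norm_eq_abs,
              abs_of_pos hm, mul_pow, real_inner_comm]
          have hexp2 : ⟪x k - xstar, g (x k) - m • (x k - xstar)⟫
              = ⟪x k - xstar, g (x k)⟫ - m * ‖x k - xstar‖ ^ 2 := by
            rw [inner_sub_right, real_inner_smul_right, real_inner_self_eq_norm_sq]
          rw [hexp1, hexp2] at hc
          nlinarith [hc]
      have hiterk : x (k + 1) - xstar = (x k - xstar) - (1 / L) • g (x k) := by
        rw [hiter k]; abel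
      have hexp : ‖(x k - xstar) - (1 / L) • g (x k)‖ ^ 2
          = ‖x k - xstar‖ ^ 2 - 2 * (1 / L * ⟪x k - xstar, g (x k)⟫)
            + (1 / L) ^ 2 * ‖g (x k)‖ ^ 2 := by
        rw [norm_sub_sq_real, real_inner_smul_right, norm_smul, Real.norm_eq_abs,
          abs_of_pos (show (0:ℝ) < 1 / L by positivity), mul_pow]
      have hexp' : L ^ 2 * ‖(x k - xstar) - (1 / L) • g (x k)‖ ^ 2
          = L ^ 2 * ‖x k - xstar‖ ^ 2 - 2 * L * ⟪x k - xstar, g (x k)⟫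
            + ‖g (x k)‖ ^ 2 := by
        rw [hexp]; field_simp
      have hLm : (0:ℝ) < L + m := by linarith
      have hfin : (L + m) * ((L - m) ^ 2 * ‖x k - xstar‖ ^ 2
            - (L ^ 2 * ‖x k - xstar‖ ^ 2 - 2 * L * ⟪x k - xstar, g (x k)⟫
              + ‖g (x k)‖ ^ 2))
          = 2 * L * ((L + m) * ⟪x k - xstar, g (x k)⟫
              - (‖g (x k)‖ ^ 2 + m * L * ‖x k - xstar‖ ^ 2))
            + (L - m) * (‖g (x k)‖ ^ 2 - m ^ 2 * ‖x k - xstar‖ ^ 2) := by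
        ring
      have h6 : 0 ≤ (L + m) * ((L - m) ^ 2 * ‖x k - xstar‖ ^ 2
            - (L ^ 2 * ‖x k - xstar‖ ^ 2 - 2 * L * ⟪x k - xstar, g (x k)⟫
              + ‖g (x k)‖ ^ 2)) := by
        rw [hfin]
        have t1 : 0 ≤ 2 * L * ((L + m) * ⟪x k - xstar, g (x k)⟫
            - (‖g (x k)‖ ^ 2 + m * L * ‖x k - xstar‖ ^ 2)) :=
          mul_nonneg (by linarith) (by linarith [hcoco])
        have t2 : 0 ≤ (L - m) * (‖g (x k)‖ ^ 2 - m ^ 2 * ‖x k - xstar‖ ^ 2) :=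
          mul_nonneg (by linarith) (by linarith [hBm])
        linarith
      have h5 : L ^ 2 * ‖(x k - xstar) - (1 / L) • g (x k)‖ ^ 2
          ≤ L ^ 2 * (((1 - m / L) * ‖x k - xstar‖) ^ 2) := by
        have hr : L ^ 2 * (((1 - m / L) * ‖x k - xstar‖) ^ 2)
            = (L - m) ^ 2 * ‖x k - xstar‖ ^ 2 := by
          field_simp
        rw [hexp', hr]
        have h7 := (mul_nonneg_iff_of_pos_left hLm).mp h6
        linarith
      have hsq : ‖(x k - xstar) - (1 / L) • g (x k)‖ ^ 2
          ≤ ((1 - m / L) * ‖x k - xstar‖) ^ 2 :=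
        le_of_mul_le_mul_left h5 (by positivity)
      have hfinal := Real.sqrt_le_sqrt hsq
      rw [Real.sqrt_sq (norm_nonneg _), Real.sqrt_sq (by positivity)] at hfinal
      rw [hiterk]
      exact hfinal
  refine ⟨hstep, ?_⟩
  have hfac : 1 - 1 / (L / m) = 1 - m / L := by rw [one_div_div]
  intro k
  rw [hfac]
  induction k with
  | zero => simp
  | succ n ih =>
      calc ‖x (n + 1) - xstar‖ ≤ (1 - m / L) * ‖x n - xstar‖ := hstep n
        _ ≤ (1 - m / L) * ((1 - m / L) ^ n * ‖x 0 - xstar‖) :=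
          mul_le_mul_of_nonneg_left ih hfac0
        _ = (1 - m / L) ^ (n + 1) * ‖x 0 - xstar‖ := by ring
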